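/- Let ξ and η be independent nonnegative random variables with continuous survival functions S_ξ and S_η satisfying S_η(t) = S_ξ(t)^h for all t ≥ 0, where h > 0 is a constant (proportional hazards). Then P(η > ξ) = 1/(1 + h), and consequently the win ratio κ = P(η > ξ)/P(ξ > η) = 1/h. -/

import Mathlib

open MeasureTheory ProbabilityTheory Set Filter Topology

section Aux

lemma surv_anti (μ : Measure ℝ) [IsFiniteMeasure μ] :
    Antitone (fun x : ℝ => (μ (Ici x)).toReal) := fun _ _ hab =>
  ENNReal.toReal_mono (measure_ne_top μ _) (measure_mono (Ici_subset_Ici.2 hab))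

lemma meas_Ioi_eq_Ici (μ : Measure ℝ) (hat : ∀ x : ℝ, μ {x} = 0) (x : ℝ) :
    μ (Ioi x) = μ (Ici x) := by
  refine le_antisymm (measure_mono Ioi_subset_Ici_self) ?_
  calc μ (Ici x) = μ ({x} ∪ Ioi x) := by rw [singleton_union, Ioi_insert]
    _ ≤ μ {x} + μ (Ioi x) := measure_union_le _ _
    _ = μ (Ioi x) := by rw [hat, zero_add]

lemma uniform_surv (μ : Measure ℝ) [IsProbabilityMeasure μ]
    (hat : ∀ x : ℝ, μ {x} = 0)
    {u : ℝ} (hu0 : 0 < u) (hu1 : u < 1) :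
    μ {x | u < (μ (Ici x)).toReal} = ENNReal.ofReal (1 - u) := by
  set S : ℝ → ℝ := fun x => (μ (Ici x)).toReal with hSdef
  have hfin : ∀ x : ℝ, μ (Ici x) ≠ ⊤ := fun x => measure_ne_top μ _
  have hSanti : Antitone S := surv_anti μ
  have hSval : ∀ x : ℝ, μ (Ici x) = ENNReal.ofReal (S x) := fun x =>
    (ENNReal.ofReal_toReal (hfin x)).symm
  set A : Set ℝ := {x | u < S x} with hAdef
  have hlower : ∀ {x y : ℝ}, x ∈ A → y ≤ x → y ∈ A := fun hx hyx =>
    lt_of_lt_of_le hx (hSanti hyx)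
  have hnotA : ∀ {x : ℝ}, x ∉ A → μ (Ici x) ≤ ENNReal.ofReal u := by
    intro x hx
    rw [hSval]
    exact ENNReal.ofReal_le_ofReal (not_lt.mp hx)
  have hinA : ∀ {x : ℝ}, x ∈ A → ENNReal.ofReal u ≤ μ (Ici x) := by
    intro x hx
    rw [hSval]
    exact ENNReal.ofReal_le_ofReal (le_of_lt hx)
  -- A is nonempty
  have hne : A.Nonempty := by
    have huniv : (⋃ n : ℕ, Ici (-(n : ℝ))) = univ := by
      ext x
      simp only [mem_iUnion, mem_Ici, mem_univ, iff_true]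
      obtain ⟨n, hn⟩ := exists_nat_ge (-x)
      exact ⟨n, by linarith⟩
    have htend : Tendsto (fun n : ℕ => μ (Ici (-(n : ℝ)))) atTop (𝓝 (μ univ)) := by
      rw [← huniv]
      exact tendsto_measure_iUnion_atTop
        (fun a b hab => Ici_subset_Ici.2 (neg_le_neg (by exact_mod_cast hab)))
    have hlt : ENNReal.ofReal u < μ univ := by
      rw [measure_univ]; exact ENNReal.ofReal_lt_one.2 hu1
    obtain ⟨n, hn⟩ := (htend.eventually (lt_mem_nhds hlt)).exists
    exact ⟨-(n : ℝ), (ENNReal.ofReal_lt_iff_lt_toReal hu0.le (hfin _)).mp hn⟩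
  -- A is bounded above
  have hbdd : BddAbove A := by
    have hempty : (⋂ n : ℕ, Ici ((n : ℝ))) = ∅ := by
      ext x
      simp only [mem_iInter, mem_Ici, mem_empty_iff_false, iff_false, not_forall, not_le]
      obtain ⟨n, hn⟩ := exists_nat_gt x
      exact ⟨n, hn⟩
    have htend : Tendsto (fun n : ℕ => μ (Ici ((n : ℝ)))) atTop
        (𝓝 (μ (⋂ n : ℕ, Ici ((n : ℝ))))) :=
      tendsto_measure_iInter_atTop (fun n => measurableSet_Ici.nullMeasurableSet)
        (fun a b hab => Ici_subset_Ici.2 (by exact_mod_cast hab)) ⟨0, hfin _⟩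
    rw [hempty, measure_empty] at htend
    obtain ⟨n, hn⟩ := (htend.eventually (gt_mem_nhds (ENNReal.ofReal_pos.2 hu0))).exists
    refine ⟨(n : ℝ), fun a ha => ?_⟩
    by_contra hcon
    push_neg at hcon
    exact absurd hn (not_lt.mpr (hinA (hlower ha hcon.le)))
  set c : ℝ := sSup A with hcdef
  have hIio : Iio c ⊆ A := by
    intro x hx
    obtain ⟨a, haA, hxa⟩ := exists_lt_of_lt_csSup hne hx
    exact hlower haA hxa.le
  have hIic : A ⊆ Iic c := fun a ha => le_csSup hbdd ha
  have hIoiIci : μ (Ioi c) = μ (Ici c) := meas_Ioi_eq_Ici μ hat c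
  have hup : μ (Ici c) ≤ ENNReal.ofReal u := by
    rw [← hIoiIci]
    have hU : (⋃ n : ℕ, Ici (c + 1 / ((n : ℝ) + 1))) = Ioi c := by
      ext x
      simp only [mem_iUnion, mem_Ici, mem_Ioi]
      constructor
      · rintro ⟨n, hn⟩
        have : (0:ℝ) < 1 / ((n : ℝ) + 1) := by positivity
        linarith
      · intro hx
        obtain ⟨n, hn⟩ := exists_nat_one_div_lt (sub_pos.2 hx)
        exact ⟨n, by linarith⟩
    have htend : Tendsto (fun n : ℕ => μ (Ici (c + 1 / ((n : ℝ) + 1)))) atTop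
        (𝓝 (μ (Ioi c))) := by
      rw [← hU]
      refine tendsto_measure_iUnion_atTop (fun a b hab => Ici_subset_Ici.2 ?_)
      have : 1 / ((b : ℝ) + 1) ≤ 1 / ((a : ℝ) + 1) := by
        apply one_div_le_one_div_of_le (by positivity)
        exact_mod_cast add_le_add_left (Nat.cast_le.2 hab) 1
      linarith
    refine le_of_tendsto htend (Filter.Eventually.of_forall fun n => hnotA ?_)
    intro hmem
    have h1 : c + 1 / ((n : ℝ) + 1) ≤ c := hIic hmem
    have h2 : (0:ℝ) < 1 / ((n : ℝ) + 1) := by positivity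
    linarith
  have hlow : ENNReal.ofReal u ≤ μ (Ici c) := by
    have hI : (⋂ n : ℕ, Ici (c - 1 / ((n : ℝ) + 1))) = Ici c := by
      ext x
      simp only [mem_iInter, mem_Ici]
      constructor
      · intro hx
        by_contra hcon
        push_neg at hcon
        obtain ⟨n, hn⟩ := exists_nat_one_div_lt (sub_pos.2 hcon)
        have := hx n
        linarith
      · intro hx n
        have : (0:ℝ) < 1 / ((n : ℝ) + 1) := by positivity
        linarith
    have htend : Tendsto (fun n : ℕ => μ (Ici (c - 1 / ((n : ℝ) + 1)))) atTop
        (𝓝 (μ (Ici c))) := by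
      rw [← hI]
      refine tendsto_measure_iInter_atTop (fun n => measurableSet_Ici.nullMeasurableSet)
        (fun a b hab => Ici_subset_Ici.2 ?_) ⟨0, hfin _⟩
      have : 1 / ((b : ℝ) + 1) ≤ 1 / ((a : ℝ) + 1) := by
        apply one_div_le_one_div_of_le (by positivity)
        exact_mod_cast add_le_add_left (Nat.cast_le.2 hab) 1
      linarith
    refine ge_of_tendsto htend (Filter.Eventually.of_forall fun n => hinA (hIio ?_))
    simp only [mem_Iio]
    have : (0:ℝ) < 1 / ((n : ℝ) + 1) := by positivity
    linarith
  have hIci : μ (Ici c) = ENNReal.ofReal u := le_antisymm hup hlow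
  have hIicIio : μ (Iic c) = μ (Iio c) := by
    refine le_antisymm ?_ (measure_mono Iio_subset_Iic_self)
    calc μ (Iic c) = μ (Iio c ∪ {c}) := by rw [Iio_union_right]
      _ ≤ μ (Iio c) + μ {c} := measure_union_le _ _
      _ = μ (Iio c) := by rw [hat, add_zero]
  have hval : μ (Iic c) = ENNReal.ofReal (1 - u) := by
    have h1 : μ (Iic c) = 1 - μ (Ioi c) := by
      rw [← compl_Ioi]
      exact prob_compl_eq_one_sub measurableSet_Ioi
    rw [h1, hIoiIci, hIci, ENNReal.ofReal_sub 1 hu0.le, ENNReal.ofReal_one]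
  refine le_antisymm ?_ ?_
  · calc μ A ≤ μ (Iic c) := measure_mono hIic
      _ = ENNReal.ofReal (1 - u) := hval
  · calc ENNReal.ofReal (1 - u) = μ (Iic c) := hval.symm
      _ = μ (Iio c) := hIicIio
      _ ≤ μ A := measure_mono hIio

end Aux

/-- Proportional hazards: if ξ, η are independent nonnegative random variables with
atomless distributions and survival functions satisfying S_η(t) = S_ξ(t)^h for all
t ≥ 0 with h > 0, then P(η > ξ) = 1/(1 + h) and the win ratio
P(η > ξ)/P(ξ > η) = 1/h. -/
theorem stmt10 {Ω : Type*} [MeasureSpace Ω] [IsProbabilityMeasure (ℙ : Measure Ω)]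
    (ξ η : Ω → ℝ) (hmξ : Measurable ξ) (hmη : Measurable η)
    (hξ0 : ∀ ω, 0 ≤ ξ ω) (hη0 : ∀ ω, 0 ≤ η ω)
    (h : ℝ) (hh : 0 < h)
    (hind : IndepFun ξ η ℙ)
    (hatomξ : ∀ x : ℝ, ℙ {ω | ξ ω = x} = 0)
    (hatomη : ∀ x : ℝ, ℙ {ω | η ω = x} = 0)
    (hprop : ∀ t : ℝ, 0 ≤ t →
      (ℙ {ω | η ω ≥ t}).toReal = (ℙ {ω | ξ ω ≥ t}).toReal ^ h) :
    (ℙ {ω | η ω > ξ ω}).toReal = 1 / (1 + h) ∧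
    (ℙ {ω | η ω > ξ ω}).toReal / (ℙ {ω | ξ ω > η ω}).toReal = 1 / h := by
  have h1h : (0:ℝ) < 1 + h := by linarith
  set μm : Measure ℝ := Measure.map ξ ℙ with hμm
  set νm : Measure ℝ := Measure.map η ℙ with hνm
  have hμinst : IsProbabilityMeasure μm := Measure.isProbabilityMeasure_map hmξ.aemeasurable
  have hνinst : IsProbabilityMeasure νm := Measure.isProbabilityMeasure_map hmη.aemeasurable
  have hatμ : ∀ x : ℝ, μm {x} = 0 := fun x => by
    rw [hμm, Measure.map_apply hmξ (measurableSet_singleton x)]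
    exact hatomξ x
  have hatν : ∀ x : ℝ, νm {x} = 0 := fun x => by
    rw [hνm, Measure.map_apply hmη (measurableSet_singleton x)]
    exact hatomη x
  have hSμ : ∀ t : ℝ, μm (Ici t) = ℙ {ω | ξ ω ≥ t} := fun t => by
    rw [hμm, Measure.map_apply hmξ measurableSet_Ici]; rfl
  have hSν : ∀ t : ℝ, νm (Ici t) = ℙ {ω | η ω ≥ t} := fun t => by
    rw [hνm, Measure.map_apply hmη measurableSet_Ici]; rfl
  have hμ0 : μm (Ici 0) = 1 := by
    rw [hSμ]
    have : {ω | ξ ω ≥ 0} = univ := eq_univ_of_forall fun ω => hξ0 ω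
    rw [this, measure_univ]
  have hν0 : νm (Ici 0) = 1 := by
    rw [hSν]
    have : {ω | η ω ≥ 0} = univ := eq_univ_of_forall fun ω => hη0 ω
    rw [this, measure_univ]
  -- survival relation for all reals
  have hprop' : ∀ x : ℝ, (νm (Ici x)).toReal = (μm (Ici x)).toReal ^ h := by
    intro x
    rcases le_or_gt 0 x with hx | hx
    · rw [hSν, hSμ]; exact hprop x hx
    · have h1 : νm (Ici x) = 1 :=
        le_antisymm prob_le_one (hν0 ▸ measure_mono (Ici_subset_Ici.2 hx.le))
      have h2 : μm (Ici x) = 1 :=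
        le_antisymm prob_le_one (hμ0 ▸ measure_mono (Ici_subset_Ici.2 hx.le))
      rw [h1, h2]
      simp [Real.one_rpow]
  have hmap : Measure.map (fun ω => (ξ ω, η ω)) ℙ = μm.prod νm :=
    (indepFun_iff_map_prod_eq_prod_map_map hmξ.aemeasurable hmη.aemeasurable).mp hind
  have hltset : MeasurableSet {p : ℝ × ℝ | p.1 < p.2} :=
    measurableSet_lt measurable_fst measurable_snd
  -- the key computation
  have key : ℙ {ω | η ω > ξ ω} = ENNReal.ofReal (1 / (1 + h)) := by
    have step1 : ℙ {ω | η ω > ξ ω} = ∫⁻ x, νm (Ici x) ∂μm := by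
      have hpre : {ω | η ω > ξ ω} = (fun ω => (ξ ω, η ω)) ⁻¹' {p : ℝ × ℝ | p.1 < p.2} := rfl
      rw [hpre, ← Measure.map_apply (hmξ.prodMk hmη) hltset, hmap,
        Measure.prod_apply hltset]
      refine lintegral_congr fun x => ?_
      have : (Prod.mk x ⁻¹' {p : ℝ × ℝ | p.1 < p.2}) = Ioi x := by
        ext y; simp [mem_Ioi]
      rw [this, meas_Ioi_eq_Ici νm hatν]
    have step2 : ∫⁻ x, νm (Ici x) ∂μm
        = ∫⁻ x, ENNReal.ofReal ((μm (Ici x)).toReal ^ h) ∂μm := by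
      refine lintegral_congr fun x => ?_
      rw [← hprop' x, ENNReal.ofReal_toReal (measure_ne_top νm _)]
    have hfmeas : Measurable fun x : ℝ => (μm (Ici x)).toReal ^ h :=
      (Real.continuous_rpow_const hh.le).measurable.comp (surv_anti μm).measurable
    have step3 : ∫⁻ x, ENNReal.ofReal ((μm (Ici x)).toReal ^ h) ∂μm
        = ∫⁻ t in Ioi (0:ℝ), μm {a | t < (μm (Ici a)).toReal ^ h} :=
      lintegral_eq_lintegral_meas_lt μm
        (Filter.Eventually.of_forall fun x => Real.rpow_nonneg ENNReal.toReal_nonneg h)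
        hfmeas.aemeasurable
    have hSle1 : ∀ a : ℝ, (μm (Ici a)).toReal ≤ 1 := fun a => by
      rw [← ENNReal.toReal_one]
      exact ENNReal.toReal_mono ENNReal.one_ne_top prob_le_one
    have hval : ∀ t ∈ Ioc (0:ℝ) 1,
        μm {a | t < (μm (Ici a)).toReal ^ h} = ENNReal.ofReal (1 - t ^ h⁻¹) := by
      intro t ht
      rcases eq_or_lt_of_le ht.2 with h1 | h1
      · have hempty : {a : ℝ | t < (μm (Ici a)).toReal ^ h} = ∅ := by
          ext a
          simp only [mem_setOf_eq, mem_empty_iff_false, iff_false, not_lt, h1]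
          exact Real.rpow_le_one ENNReal.toReal_nonneg (hSle1 a) hh.le
        rw [hempty, measure_empty, h1, Real.one_rpow, sub_self, ENNReal.ofReal_zero]
      · have hu0 : 0 < t ^ h⁻¹ := Real.rpow_pos_of_pos ht.1 _
        have hu1 : t ^ h⁻¹ < 1 := Real.rpow_lt_one ht.1.le h1 (by positivity)
        have hset : {a : ℝ | t < (μm (Ici a)).toReal ^ h}
            = {a : ℝ | t ^ h⁻¹ < (μm (Ici a)).toReal} := by
          ext a
          simp only [mem_setOf_eq]
          exact (Real.rpow_inv_lt_iff_of_pos ht.1.le ENNReal.toReal_nonneg hh).symm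
        rw [hset, uniform_surv μm hatμ hu0 hu1]
    have step4 : ∫⁻ t in Ioi (0:ℝ), μm {a | t < (μm (Ici a)).toReal ^ h}
        = ∫⁻ t in Ioc (0:ℝ) 1, ENNReal.ofReal (1 - t ^ h⁻¹) := by
      rw [← Ioc_union_Ioi_eq_Ioi (zero_le_one : (0:ℝ) ≤ 1),
        lintegral_union measurableSet_Ioi Ioc_disjoint_Ioi_same]
      have hzero : ∫⁻ t in Ioi (1:ℝ), μm {a | t < (μm (Ici a)).toReal ^ h} = 0 := by
        have : ∀ t ∈ Ioi (1:ℝ), μm {a | t < (μm (Ici a)).toReal ^ h} = 0 := by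
          intro t ht
          have hempty : {a : ℝ | t < (μm (Ici a)).toReal ^ h} = ∅ := by
            ext a
            simp only [mem_setOf_eq, mem_empty_iff_false, iff_false, not_lt]
            exact le_trans (Real.rpow_le_one ENNReal.toReal_nonneg (hSle1 a) hh.le) ht.le
          rw [hempty, measure_empty]
        calc ∫⁻ t in Ioi (1:ℝ), μm {a | t < (μm (Ici a)).toReal ^ h}
            = ∫⁻ _ in Ioi (1:ℝ), 0 :=
              setLIntegral_congr_fun measurableSet_Ioi this
          _ = 0 := lintegral_zero
      rw [hzero, add_zero]
      exact setLIntegral_congr_fun measurableSet_Ioc hval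
    have hII : IntervalIntegrable (fun t : ℝ => 1 - t ^ h⁻¹) volume 0 1 :=
      intervalIntegrable_const.sub (intervalIntegral.intervalIntegrable_rpow' (by nlinarith [inv_pos.mpr hh]))
    have step5 : ∫⁻ t in Ioc (0:ℝ) 1, ENNReal.ofReal (1 - t ^ h⁻¹)
        = ENNReal.ofReal (∫ t in Ioc (0:ℝ) 1, (1 - t ^ h⁻¹)) := by
      refine (ofReal_integral_eq_lintegral_ofReal ?_ ?_).symm
      · exact hII.1
      · refine (ae_restrict_iff' measurableSet_Ioc).2 (Filter.Eventually.of_forall ?_)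
        intro t ht
        have : t ^ h⁻¹ ≤ 1 := Real.rpow_le_one ht.1.le ht.2 (by positivity)
        show (0:ℝ) ≤ 1 - t ^ h⁻¹
        linarith
    have step6 : (∫ t in Ioc (0:ℝ) 1, (1 - t ^ h⁻¹)) = 1 / (1 + h) := by
      rw [← intervalIntegral.integral_of_le (zero_le_one : (0:ℝ) ≤ 1)]
      rw [intervalIntegral.integral_sub intervalIntegrable_const
        (intervalIntegral.intervalIntegrable_rpow' (by nlinarith [inv_pos.mpr hh])),
        intervalIntegral.integral_const, integral_rpow (Or.inl (by nlinarith [inv_pos.mpr hh]))]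
      rw [Real.one_rpow, Real.zero_rpow (by positivity)]
      have hinv : h⁻¹ + 1 ≠ 0 := by positivity
      field_simp
      simp only [sub_zero, smul_eq_mul, one_mul]; ring
    rw [step1, step2, step3, step4, step5, step6]
  -- P(ξ = η) = 0
  have hdiag : ℙ {ω | ξ ω = η ω} = 0 := by
    have hds : MeasurableSet {p : ℝ × ℝ | p.1 = p.2} :=
      measurableSet_eq_fun measurable_fst measurable_snd
    have hpre : {ω | ξ ω = η ω} = (fun ω => (ξ ω, η ω)) ⁻¹' {p : ℝ × ℝ | p.1 = p.2} := rfl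
    rw [hpre, ← Measure.map_apply (hmξ.prodMk hmη) hds, hmap, Measure.prod_apply hds]
    have hz : ∀ x : ℝ, νm (Prod.mk x ⁻¹' {p : ℝ × ℝ | p.1 = p.2}) = 0 := by
      intro x
      have : (Prod.mk x ⁻¹' {p : ℝ × ℝ | p.1 = p.2}) = {x} := by
        ext y; simp [eq_comm]
      rw [this]; exact hatν x
    simp only [hz]
    exact lintegral_zero
  -- P(ξ > η) = 1 - P(η > ξ)
  have hcompl : ℙ {ω | ξ ω > η ω} = 1 - ENNReal.ofReal (1 / (1 + h)) := by
    have hc : {ω | η ω > ξ ω}ᶜ = {ω | ξ ω > η ω} ∪ {ω | ξ ω = η ω} := by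
      ext ω
      simp only [mem_compl_iff, mem_setOf_eq, mem_union, not_lt, gt_iff_lt]
      constructor
      · intro hle
        rcases lt_or_eq_of_le hle with h' | h'
        · exact Or.inl h'
        · exact Or.inr h'.symm
      · rintro (h' | h')
        · exact h'.le
        · exact le_of_eq h'.symm
    have hun : ℙ ({ω | ξ ω > η ω} ∪ {ω | ξ ω = η ω}) = ℙ {ω | ξ ω > η ω} := by
      refine le_antisymm ?_ (measure_mono subset_union_left)
      calc ℙ ({ω | ξ ω > η ω} ∪ {ω | ξ ω = η ω})
          ≤ ℙ {ω | ξ ω > η ω} + ℙ {ω | ξ ω = η ω} := measure_union_le _ _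
        _ = ℙ {ω | ξ ω > η ω} := by rw [hdiag, add_zero]
    rw [← hun, ← hc, prob_compl_eq_one_sub (measurableSet_lt hmξ hmη), key]
  have hfrac0 : (0:ℝ) ≤ 1 / (1 + h) := by positivity
  have g1 : (ℙ {ω | η ω > ξ ω}).toReal = 1 / (1 + h) := by
    rw [key, ENNReal.toReal_ofReal hfrac0]
  have g2 : (ℙ {ω | ξ ω > η ω}).toReal = h / (1 + h) := by
    have hsub : (1:ENNReal) - ENNReal.ofReal (1 / (1 + h)) = ENNReal.ofReal (1 - 1 / (1 + h)) := by
      rw [ENNReal.ofReal_sub 1 hfrac0, ENNReal.ofReal_one]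
    rw [hcompl, hsub,
      ENNReal.toReal_ofReal (by rw [sub_nonneg, div_le_one h1h]; linarith)]
    field_simp
    ring
  refine ⟨g1, ?_⟩
  have hne : h ≠ 0 := hh.ne'
  have h1ne : (1:ℝ) + h ≠ 0 := h1h.ne'
  rw [g1, g2]
  field_simp
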